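/- Suppose f is standard self-concordant and strictly convex, x ∈ ℝⁿ, H is positive definite, d = -H∇f(x) ≠ 0, ρ = ∇f(x)ᵀH∇f(x), δ = √(dᵀ∇²f(x)d), η = ρ/δ, and t = ρ/((ρ+δ)δ). Then f(x + t d) ≤ f(x) - (η - log(1+η)). -/

import Mathlib

open Real
open scoped RealInnerProductSpace

lemma rpow_three_halves {u : ℝ} (hu : 0 < u) : u ^ ((3:ℝ)/2) = u * Real.sqrt u := by
  rw [show (3:ℝ)/2 = 1 + 1/2 by norm_num, Real.rpow_add hu, Real.rpow_one,
    Real.sqrt_eq_rpow]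

lemma oneD (φ φ1 φ2 φ3 : ℝ → ℝ) (δ t : ℝ)
    (h1 : ∀ s, HasDerivAt φ (φ1 s) s)
    (h2 : ∀ s, HasDerivAt φ1 (φ2 s) s)
    (h3 : ∀ s, HasDerivAt φ2 (φ3 s) s)
    (hpos : ∀ s, 0 < φ2 s)
    (hsc : ∀ s, |φ3 s| ≤ 2 * (φ2 s) ^ ((3:ℝ)/2))
    (hδ : δ = Real.sqrt (φ2 0))
    (ht0 : 0 ≤ t) (ht1 : t * δ < 1) :
    φ t ≤ φ 0 + φ1 0 * t - t * δ - Real.log (1 - t * δ) := by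
  have hδ0 : 0 < δ := hδ ▸ Real.sqrt_pos.2 (hpos 0)
  have htδ : t < δ⁻¹ := by
    have h : δ⁻¹ * δ = 1 := inv_mul_cancel₀ hδ0.ne'
    nlinarith
  -- ψ and its derivative
  set ψ : ℝ → ℝ := fun s => (Real.sqrt (φ2 s))⁻¹ with hψdef
  have hsqrt_pos : ∀ s, 0 < Real.sqrt (φ2 s) := fun s => Real.sqrt_pos.2 (hpos s)
  have hψ : ∀ s, HasDerivAt ψ (-(φ3 s / (2 * Real.sqrt (φ2 s))) / (Real.sqrt (φ2 s))^2) s := by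
    intro s
    exact ((h3 s).sqrt (hpos s).ne').inv (hsqrt_pos s).ne'
  have hψ_ge : ∀ s, -1 ≤ -(φ3 s / (2 * Real.sqrt (φ2 s))) / (Real.sqrt (φ2 s))^2 := by
    intro s
    have hu := hpos s
    have hs := hsqrt_pos s
    have h3le : φ3 s ≤ 2 * (φ2 s * Real.sqrt (φ2 s)) := by
      have := hsc s
      rw [rpow_three_halves hu] at this
      exact (abs_le.1 this).2
    have hsq : Real.sqrt (φ2 s) ^ 2 = φ2 s := Real.sq_sqrt hu.le
    have key : φ3 s / (2 * Real.sqrt (φ2 s)) / (Real.sqrt (φ2 s))^2 ≤ 1 := by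
      rw [hsq, div_div, div_le_one (by positivity)]
      nlinarith
    rw [neg_div]
    linarith
  -- χ monotone
  have hχ : Monotone (fun s => ψ s + s) := by
    apply monotone_of_deriv_nonneg
    · exact fun s => ((hψ s).add (hasDerivAt_id' (𝕜 := ℝ) s)).differentiableAt
    · intro s
      rw [HasDerivAt.deriv (f := fun s => ψ s + s) ((hψ s).add (hasDerivAt_id' (𝕜 := ℝ) s))]
      have := hψ_ge s
      linarith
  have hψ0 : ψ 0 = δ⁻¹ := by rw [hψdef, hδ]
  have hψ_lb : ∀ s ∈ Set.Icc (0:ℝ) t, δ⁻¹ - s ≤ ψ s := by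
    intro s hs
    have := hχ hs.1
    simp only at this
    rw [hψ0] at this
    linarith
  -- φ2 bound on the interval
  have hφ2_ub : ∀ s ∈ Set.Icc (0:ℝ) t, φ2 s ≤ ((δ⁻¹ - s)⁻¹)^2 := by
    intro s hs
    have hds : 0 < δ⁻¹ - s := by
      have := hs.2; linarith
    have h₁ : δ⁻¹ - s ≤ (Real.sqrt (φ2 s))⁻¹ := hψ_lb s hs
    have h₂ : Real.sqrt (φ2 s) ≤ (δ⁻¹ - s)⁻¹ := by
      rw [← inv_inv (Real.sqrt (φ2 s))]
      exact inv_anti₀ hds h₁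
    calc φ2 s = (Real.sqrt (φ2 s))^2 := (Real.sq_sqrt (hpos s).le).symm
      _ ≤ ((δ⁻¹ - s)⁻¹)^2 := by
          apply pow_le_pow_left₀ (Real.sqrt_nonneg _) h₂
  -- φ1 bound
  have hinv_deriv : ∀ s ∈ Set.Ioo (0:ℝ) t, HasDerivAt (fun s => (δ⁻¹ - s)⁻¹) (((δ⁻¹ - s)⁻¹)^2) s := by
    intro s hs
    have hds : δ⁻¹ - s ≠ 0 := by
      have := hs.2; nlinarith [htδ]
    have h0 : HasDerivAt (fun s : ℝ => δ⁻¹ - s) (-1) s := by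
      simpa using (hasDerivAt_id' (𝕜 := ℝ) s).const_sub δ⁻¹
    have := h0.inv hds
    refine this.congr_deriv ?_
    rw [neg_neg, one_div, inv_pow]
  -- φ1 bound via antitonicity of g
  have hIcc : Convex ℝ (Set.Icc (0:ℝ) t) := convex_Icc 0 t
  have hint : interior (Set.Icc (0:ℝ) t) = Set.Ioo 0 t := interior_Icc
  have hds_pos : ∀ s ∈ Set.Icc (0:ℝ) t, 0 < δ⁻¹ - s := by
    intro s hs; have := hs.2; linarith
  have hinv_cont : ContinuousOn (fun s : ℝ => (δ⁻¹ - s)⁻¹) (Set.Icc 0 t) := by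
    apply ContinuousOn.inv₀
    · exact (continuous_const.sub continuous_id).continuousOn
    · exact fun s hs => (hds_pos s hs).ne'
  have hg_anti : AntitoneOn (fun s => φ1 s - (δ⁻¹ - s)⁻¹) (Set.Icc 0 t) := by
    apply antitoneOn_of_deriv_nonpos hIcc
    · exact (ContinuousOn.sub (fun s _ => (h2 s).continuousAt.continuousWithinAt) hinv_cont)
    · intro s hs
      rw [hint] at hs
      exact ((h2 s).sub (hinv_deriv s hs)).differentiableAt.differentiableWithinAt
    · intro s hs
      rw [hint] at hs
      rw [HasDerivAt.deriv (f := fun s => φ1 s - (δ⁻¹ - s)⁻¹) ((h2 s).sub (hinv_deriv s hs))]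
      have := hφ2_ub s ⟨hs.1.le, hs.2.le⟩
      linarith
  have hφ1_ub : ∀ s ∈ Set.Icc (0:ℝ) t, φ1 s ≤ φ1 0 - δ + (δ⁻¹ - s)⁻¹ := by
    intro s hs
    have := hg_anti (Set.left_mem_Icc.2 ht0) hs hs.1
    simp only [sub_zero, inv_inv] at this
    linarith
  -- final bound via antitonicity of G
  have hlog_deriv : ∀ s ∈ Set.Ioo (0:ℝ) t, HasDerivAt (fun s : ℝ => Real.log (δ⁻¹ - s)) (-(δ⁻¹ - s)⁻¹) s := by
    intro s hs
    have h0 : HasDerivAt (fun s : ℝ => δ⁻¹ - s) (-1) s := by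
      simpa using (hasDerivAt_id' (𝕜 := ℝ) s).const_sub δ⁻¹
    have := h0.log (hds_pos s ⟨hs.1.le, hs.2.le⟩).ne'
    convert this using 1
    field_simp
  have hG_deriv : ∀ s ∈ Set.Ioo (0:ℝ) t,
      HasDerivAt (fun s => φ s - (φ1 0 - δ) * s + Real.log (δ⁻¹ - s))
        (φ1 s - (φ1 0 - δ) + -(δ⁻¹ - s)⁻¹) s := by
    intro s hs
    have := ((h1 s).sub ((hasDerivAt_id' (𝕜 := ℝ) s).const_mul (φ1 0 - δ))).add (hlog_deriv s hs)
    simp only [mul_one] at this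
    exact this
  have hG_anti : AntitoneOn (fun s => φ s - (φ1 0 - δ) * s + Real.log (δ⁻¹ - s)) (Set.Icc 0 t) := by
    apply antitoneOn_of_deriv_nonpos hIcc
    · apply ContinuousOn.add
      · exact ContinuousOn.sub (fun s _ => (h1 s).continuousAt.continuousWithinAt)
          (continuous_const.mul continuous_id).continuousOn
      · exact ContinuousOn.log (continuous_const.sub continuous_id).continuousOn
          (fun s hs => (hds_pos s hs).ne')
    · intro s hs
      rw [hint] at hs
      exact (hG_deriv s hs).differentiableAt.differentiableWithinAt
    · intro s hs
      rw [hint] at hs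
      rw [(hG_deriv s hs).deriv]
      have h₁ := hφ1_ub s ⟨hs.1.le, hs.2.le⟩
      have h₂ := hds_pos s ⟨hs.1.le, hs.2.le⟩
      linarith
  have hfin := hG_anti (Set.left_mem_Icc.2 ht0) (Set.right_mem_Icc.2 ht0) ht0
  simp only [mul_zero, sub_zero] at hfin
  -- hfin : φ t - (φ1 0 - δ) * t + log (δ⁻¹ - t) ≤ φ 0 + log δ⁻¹
  have hlog1 : Real.log (1 - t * δ) = Real.log (δ⁻¹ - t) + Real.log δ := by
    rw [← Real.log_mul (hds_pos t (Set.right_mem_Icc.2 ht0)).ne' hδ0.ne']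
    field_simp
  have hlog2 : Real.log δ⁻¹ = -Real.log δ := Real.log_inv δ
  rw [hlog2] at hfin
  rw [hlog1]
  linarith

section aux
variable {n : ℕ} (f : EuclideanSpace ℝ (Fin n) → ℝ)

lemma fin_const_eq_two (d : EuclideanSpace ℝ (Fin n)) :
    (fun _ : Fin 2 => d) = ![d, d] := by
  funext i; fin_cases i <;> rfl

lemma fin_const_eq_three (d : EuclideanSpace ℝ (Fin n)) :
    (fun _ : Fin 3 => d) = ![d, d, d] := by
  funext i; fin_cases i <;> rfl

lemma line_deriv (hf : ContDiff ℝ 3 f) (x d : EuclideanSpace ℝ (Fin n))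
    (k : ℕ) (hk : k < 3) (s : ℝ) :
    HasDerivAt (fun s : ℝ => iteratedFDeriv ℝ k f (x + s • d) (fun _ => d))
      (iteratedFDeriv ℝ (k+1) f (x + s • d) (fun _ => d)) s := by
  set p : EuclideanSpace ℝ (Fin n) := x + s • d with hp
  have hdg : DifferentiableAt ℝ (iteratedFDeriv ℝ k f) p := by
    apply (hf.differentiable_iteratedFDeriv (by exact_mod_cast hk)) p
  have hcurve : HasDerivAt (fun s : ℝ => x + s • d) d s := by
    simpa using ((hasDerivAt_id' (𝕜 := ℝ) s).smul_const d).const_add x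
  have hgf : HasFDerivAt (iteratedFDeriv ℝ k f) (fderiv ℝ (iteratedFDeriv ℝ k f) p) p :=
    hdg.hasFDerivAt
  set L := ContinuousMultilinearMap.apply ℝ (fun _ : Fin k => EuclideanSpace ℝ (Fin n)) ℝ
    (fun _ => d) with hL
  have hcomp : HasFDerivAt (fun y => iteratedFDeriv ℝ k f y (fun _ => d))
      (L.comp (fderiv ℝ (iteratedFDeriv ℝ k f) p)) p := L.hasFDerivAt.comp p hgf
  have := hcomp.comp_hasDerivAt s hcurve
  exact this

end aux

theorem adaptive_decrease {n : ℕ}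
    (f : EuclideanSpace ℝ (Fin n) → ℝ) (hf : ContDiff ℝ 3 f)
    (hsc : ∀ (x h : EuclideanSpace ℝ (Fin n)),
      |iteratedFDeriv ℝ 3 f x ![h, h, h]| ≤
        2 * (iteratedFDeriv ℝ 2 f x ![h, h]) ^ ((3 : ℝ) / 2))
    (hconv : ∀ (x h : EuclideanSpace ℝ (Fin n)), h ≠ 0 →
      0 < iteratedFDeriv ℝ 2 f x ![h, h])
    (x : EuclideanSpace ℝ (Fin n))
    (H : EuclideanSpace ℝ (Fin n) →L[ℝ] EuclideanSpace ℝ (Fin n))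
    (hHsym : ∀ u v : EuclideanSpace ℝ (Fin n), ⟪H u, v⟫ = ⟪u, H v⟫)
    (hHpos : ∀ v : EuclideanSpace ℝ (Fin n), v ≠ 0 → 0 < ⟪H v, v⟫)
    (d : EuclideanSpace ℝ (Fin n)) (hd : d = -(H (gradient f x))) (hd0 : d ≠ 0)
    (ρ δ η t : ℝ)
    (hρ : ρ = ⟪gradient f x, H (gradient f x)⟫)
    (hδ : δ = Real.sqrt (iteratedFDeriv ℝ 2 f x ![d, d]))
    (hη : η = ρ / δ) (ht : t = ρ / ((ρ + δ) * δ)) :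
    f (x + t • d) ≤ f x - (η - Real.log (1 + η)) := by
  -- basic positivity facts
  have hg0 : gradient f x ≠ 0 := by
    intro h
    apply hd0
    rw [hd, h, map_zero, neg_zero]
  have hρ0 : 0 < ρ := by
    rw [hρ, real_inner_comm]
    exact hHpos _ hg0
  have hΦ20 : 0 < iteratedFDeriv ℝ 2 f x ![d, d] := hconv x d hd0
  have hδ0 : 0 < δ := hδ ▸ Real.sqrt_pos.2 hΦ20
  have ht0 : 0 ≤ t := by
    rw [ht]; positivity
  have htδ1 : t * δ < 1 := by
    rw [ht]
    rw [div_mul_eq_mul_div, div_lt_one (by positivity)]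
    nlinarith
  -- the 1-D reduction
  have key := oneD (fun s => f (x + s • d))
      (fun s => iteratedFDeriv ℝ 1 f (x + s • d) (fun _ => d))
      (fun s => iteratedFDeriv ℝ 2 f (x + s • d) (fun _ => d))
      (fun s => iteratedFDeriv ℝ 3 f (x + s • d) (fun _ => d))
      δ t
      (fun s => by
        have := line_deriv f hf x d 0 (by norm_num) s
        simp only [iteratedFDeriv_zero_apply] at this
        exact this)
      (fun s => line_deriv f hf x d 1 (by norm_num) s)
      (fun s => line_deriv f hf x d 2 (by norm_num) s)
      (fun s => by
        have := hconv (x + s • d) d hd0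
        rwa [← fin_const_eq_two] at this)
      (fun s => by
        have := hsc (x + s • d) d
        rwa [← fin_const_eq_three, ← fin_const_eq_two] at this)
      (by
        rw [hδ]
        congr 1
        rw [← fin_const_eq_two]
        norm_num)
      ht0 htδ1
  simp only [zero_smul, add_zero] at key
  -- identify the first derivative with -ρ
  have hgrad : iteratedFDeriv ℝ 1 f x (fun _ => d) = -ρ := by
    rw [iteratedFDeriv_one_apply]
    have hdiff : DifferentiableAt ℝ f x := (hf.differentiable (by norm_num)) x
    have hG : HasFDerivAt f (InnerProductSpace.toDual ℝ _ (gradient f x)) x :=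
      hdiff.hasGradientAt.hasFDerivAt
    rw [hG.fderiv]
    show ⟪gradient f x, d⟫ = -ρ
    rw [hd, inner_neg_right, hρ]
  rw [hgrad] at key
  -- final arithmetic
  have hsum : -ρ * t - t * δ = -η := by
    rw [ht, hη]
    field_simp
    ring
  have h1tδ : 1 - t * δ = (1 + η)⁻¹ := by
    have hρδ : (0:ℝ) < ρ + δ := by linarith
    rw [ht, hη]
    field_simp
    ring
  rw [h1tδ, Real.log_inv] at key
  linarith
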